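/- (Proposition 1, scalar case) Let λ > 0, γ > 0, β ∈ ℝ, and define Ψ(u) = |u| + γ|u - β| for u ∈ ℝ. Then for all z ∈ ℝ, prox_{λΨ}(z) = S_λ( S_{λγ}( z - β - λ·sign(β) ) + β + λ·sign(β) ), where S_t is soft-thresholding with threshold t, provided β ≠ 0. -/

import Mathlib

/-- Soft-thresholding operator. -/
noncomputable def softThresh (t x : ℝ) : ℝ := Real.sign x * max (|x| - t) 0

lemma soft_prop (t x : ℝ) (ht : 0 < t) :
    ∃ s : ℝ, |s| ≤ 1 ∧ s * softThresh t x = |softThresh t x| ∧ x - softThresh t x = t * s := by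
  by_cases h : |x| ≤ t
  · have h0 : softThresh t x = 0 := by
      unfold softThresh; rw [max_eq_right (by linarith)]; ring
    refine ⟨x / t, ?_, ?_, ?_⟩
    · rw [abs_div, abs_of_pos ht, div_le_one ht]; exact h
    · rw [h0]; simp
    · rw [h0]; field_simp; ring
  · push_neg at h
    rcases lt_trichotomy x 0 with hx | hx | hx
    · have hs : Real.sign x = -1 := Real.sign_of_neg hx
      have hab : |x| = -x := abs_of_neg hx
      have h0 : softThresh t x = x + t := by
        unfold softThresh; rw [max_eq_left (by linarith), hs, hab]; ring
      refine ⟨-1, by norm_num, ?_, ?_⟩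
      · rw [h0, abs_of_neg (by linarith [h, hab])]; ring
      · rw [h0]; ring
    · exfalso; rw [hx] at h; simp at h; linarith
    · have hs : Real.sign x = 1 := Real.sign_of_pos hx
      have hab : |x| = x := abs_of_pos hx
      have h0 : softThresh t x = x - t := by
        unfold softThresh; rw [max_eq_left (by linarith), hs, hab]; ring
      refine ⟨1, by norm_num, ?_, ?_⟩
      · rw [h0, abs_of_pos (by linarith [h, hab])]; ring
      · rw [h0]; ring

lemma soft_neg (t x : ℝ) : softThresh t (-x) = - softThresh t x := by
  unfold softThresh; rw [Real.sign_neg, abs_neg]; ring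

lemma pos_case (lam gam beta z : ℝ) (hlam : 0 < lam) (hgam : 0 < gam) (hb : 0 < beta) :
    ∃ s t : ℝ, |s| ≤ 1 ∧ |t| ≤ 1 ∧
      s * softThresh lam (softThresh (lam * gam) (z - beta - lam) + beta + lam)
        = |softThresh lam (softThresh (lam * gam) (z - beta - lam) + beta + lam)| ∧
      t * (softThresh lam (softThresh (lam * gam) (z - beta - lam) + beta + lam) - beta)
        = |softThresh lam (softThresh (lam * gam) (z - beta - lam) + beta + lam) - beta| ∧
      z - softThresh lam (softThresh (lam * gam) (z - beta - lam) + beta + lam)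
        = lam * s + lam * gam * t := by
  set a := z - beta - lam with ha
  set y := softThresh (lam * gam) a with hy
  set w := y + beta + lam with hw
  set M := softThresh lam w with hM
  obtain ⟨s₀, hs1, hs2, hs3⟩ := soft_prop lam w hlam
  obtain ⟨t₀, ht1, ht2, ht3⟩ := soft_prop (lam * gam) a (mul_pos hlam hgam)
  rw [← hy] at ht2 ht3
  rw [← hM] at hs2 hs3
  have hkey : z - M = lam * s₀ + lam * gam * t₀ := by
    have : z = a + beta + lam := by rw [ha]; ring
    rw [this]; linarith [hs3, ht3]
  by_cases hM0 : M = 0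
  · -- M = 0 case
    have hwl : w = lam * s₀ := by linarith [hs3, hM0.symm ▸ hs3]
    have hwle : |w| ≤ lam := by
      rw [hwl, abs_mul, abs_of_pos hlam]
      nlinarith [abs_nonneg s₀]
    have hyneg : y < 0 := by
      by_contra hc
      push_neg at hc
      have h5 : w ≤ |w| := le_abs_self w
      rw [hw] at h5
      linarith
    have ht0 : t₀ = -1 := by
      have : t₀ * y = -y := by rw [ht2, abs_of_neg hyneg]
      have h2 : (t₀ + 1) * y = 0 := by linarith [this]
      rcases mul_eq_zero.mp h2 with h | h
      · linarith
      · exact absurd h (ne_of_lt hyneg)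
    refine ⟨s₀, -1, hs1, by norm_num, hs2, ?_, ?_⟩
    · rw [hM0, abs_of_neg (by linarith : (0:ℝ) - beta < 0)]; ring
    · rw [hkey, ht0]
  · rcases lt_trichotomy M 0 with hMlt | hMeq | hMgt
    · -- M < 0, so s₀ = -1
      have hs0 : s₀ = -1 := by
        have : s₀ * M = -M := by rw [hs2, abs_of_neg hMlt]
        have h2 : (s₀ + 1) * M = 0 := by linarith
        rcases mul_eq_zero.mp h2 with h | h
        · linarith
        · exact absurd h hM0
      have hyv : y = M - beta - 2 * lam := by
        have : w - M = lam * s₀ := hs3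
        rw [hs0] at this
        rw [hw] at this
        linarith
      have hyneg : y < 0 := by rw [hyv]; linarith
      have ht0 : t₀ = -1 := by
        have : t₀ * y = -y := by rw [ht2, abs_of_neg hyneg]
        have h2 : (t₀ + 1) * y = 0 := by linarith
        rcases mul_eq_zero.mp h2 with h | h
        · linarith
        · exact absurd h (ne_of_lt hyneg)
      refine ⟨s₀, -1, hs1, by norm_num, hs2, ?_, ?_⟩
      · rw [abs_of_neg (by linarith : M - beta < 0)]; ring
      · rw [hkey, ht0]
    · exact absurd hMeq hM0
    · -- M > 0, so s₀ = 1, y = M - beta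
      have hs0 : s₀ = 1 := by
        have : s₀ * M = M := by rw [hs2, abs_of_pos hMgt]
        have h2 : (s₀ - 1) * M = 0 := by linarith
        rcases mul_eq_zero.mp h2 with h | h
        · linarith
        · exact absurd h hM0
      have hyv : y = M - beta := by
        have : w - M = lam * s₀ := hs3
        rw [hs0] at this
        rw [hw] at this
        linarith
      refine ⟨s₀, t₀, hs1, ht1, hs2, ?_, hkey⟩
      rw [← hyv]; exact ht2

lemma strict_min (lam gam beta z M u s t : ℝ) (hlam : 0 < lam) (hgam : 0 < gam)
    (hs1 : |s| ≤ 1) (ht1 : |t| ≤ 1) (hsM : s * M = |M|) (htM : t * (M - beta) = |M - beta|)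
    (hopt : z - M = lam * s + lam * gam * t) (hu : u ≠ M) :
    (1/2) * (z - M)^2 + lam * (|M| + gam * |M - beta|)
      < (1/2) * (z - u)^2 + lam * (|u| + gam * |u - beta|) := by
  have h1 : s * u ≤ |u| := by
    calc s * u ≤ |s * u| := le_abs_self _
    _ = |s| * |u| := abs_mul _ _
    _ ≤ 1 * |u| := mul_le_mul_of_nonneg_right hs1 (abs_nonneg u)
    _ = |u| := one_mul _
  have h2 : t * (u - beta) ≤ |u - beta| := by
    calc t * (u - beta) ≤ |t * (u - beta)| := le_abs_self _
    _ = |t| * |u - beta| := abs_mul _ _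
    _ ≤ 1 * |u - beta| := mul_le_mul_of_nonneg_right ht1 (abs_nonneg _)
    _ = |u - beta| := one_mul _
  have h3 : 0 < (u - M)^2 := by
    have : u - M ≠ 0 := sub_ne_zero.mpr hu
    positivity
  have hz : z = M + lam * s + lam * gam * t := by linarith
  subst hz
  rw [← hsM, ← htM]
  nlinarith [mul_le_mul_of_nonneg_left h1 hlam.le,
    mul_le_mul_of_nonneg_left h2 (mul_pos hlam hgam).le, h3]

/-- Proposition 1 (scalar case): for Ψ(u) = |u| + γ|u - β| with β ≠ 0, the
proximal operator of λΨ at z is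
S_λ( S_{λγ}( z - β - λ·sign(β) ) + β + λ·sign(β) ), i.e. this point is the
unique minimizer of u ↦ (1/2)(z-u)² + λΨ(u). -/
theorem csr_prox_formula (lam gam beta z : ℝ) (hlam : 0 < lam) (hgam : 0 < gam)
    (hbeta : beta ≠ 0) :
    ∀ u : ℝ,
      u ≠ softThresh lam (softThresh (lam * gam) (z - beta - lam * Real.sign beta)
            + beta + lam * Real.sign beta) →
      (1/2) * (z - (softThresh lam (softThresh (lam * gam) (z - beta - lam * Real.sign beta)
            + beta + lam * Real.sign beta)))^2
        + lam * (|softThresh lam (softThresh (lam * gam) (z - beta - lam * Real.sign beta)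
            + beta + lam * Real.sign beta)|
          + gam * |softThresh lam (softThresh (lam * gam) (z - beta - lam * Real.sign beta)
            + beta + lam * Real.sign beta) - beta|) <
      (1/2) * (z - u)^2 + lam * (|u| + gam * |u - beta|) := by
  intro u hu
  rcases lt_trichotomy beta 0 with hb | hb | hb
  · rw [Real.sign_of_neg hb] at hu ⊢
    have hb' : 0 < -beta := by linarith
    obtain ⟨s, t, hs1, ht1, hs2, ht2, hkey⟩ := pos_case lam gam (-beta) (-z) hlam hgam hb'
    have e1 : -z - -beta - lam = -(z - beta - lam * (-1)) := by ring
    have hMM : softThresh lam (softThresh (lam * gam) (-z - -beta - lam) + -beta + lam)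
        = - softThresh lam (softThresh (lam * gam) (z - beta - lam * (-1)) + beta + lam * (-1)) := by
      rw [e1, soft_neg]
      rw [show -softThresh (lam * gam) (z - beta - lam * (-1)) + -beta + lam
          = -(softThresh (lam * gam) (z - beta - lam * (-1)) + beta + lam * (-1)) from by ring,
        soft_neg]
    rw [hMM] at hs2 ht2 hkey
    set M := softThresh lam (softThresh (lam * gam) (z - beta - lam * (-1)) + beta + lam * (-1))
      with hMdef
    refine strict_min lam gam beta z M u (-s) (-t) hlam hgam (by rwa [abs_neg]) (by rwa [abs_neg])
      ?_ ?_ ?_ hu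
    · rw [← abs_neg M, ← hs2]; ring
    · rw [← abs_neg (M - beta), show -(M - beta) = -M - -beta from by ring, ← ht2]; ring
    · linear_combination -hkey
  · exact absurd hb hbeta
  · rw [Real.sign_of_pos hb] at hu ⊢
    simp only [mul_one] at hu ⊢
    obtain ⟨s, t, hs1, ht1, hs2, ht2, hkey⟩ := pos_case lam gam beta z hlam hgam hb
    exact strict_min lam gam beta z _ u s t hlam hgam hs1 ht1 hs2 ht2 hkey hu
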